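/- Every function f : {0,1}^k → ℚ that is of product type admits a normalized product-type expression. -/

import Mathlib

/-- `(-1)^a` for `a ∈ GF(2)`. -/
def signQ (a : ZMod 2) : ℚ := if a = 0 then 1 else -1

/-- The factor corresponding to one equality/disequality term `((i,j), lab)`:
`χ₌(x_i, x_j)` if `lab = true`, `χ≠(x_i, x_j)` if `lab = false`. -/
def edpFactor {k : ℕ} (t : (Fin k × Fin k) × Bool) (x : Fin k → ZMod 2) : ℚ :=
  if t.2 = true then (if x t.1.1 = x t.1.2 then 1 else 0)
  else (if x t.1.1 = x t.1.2 then 0 else 1)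

/-- The equality/disequality product determined by a list of terms `T`. -/
def gT {k : ℕ} (T : List ((Fin k × Fin k) × Bool)) (x : Fin k → ZMod 2) : ℚ :=
  (T.map (fun t => edpFactor t x)).prod

/-- `g` is a finite product of equality and disequality factors. -/
def IsEDP {k : ℕ} (g : (Fin k → ZMod 2) → ℚ) : Prop :=
  ∃ T : List ((Fin k × Fin k) × Bool), ∀ x, g x = gT T x

/-- `f` is of product type. -/
def IsProductType {k : ℕ} (f : (Fin k → ZMod 2) → ℚ) : Prop :=
  ∃ (U : Fin k → ZMod 2 → ℚ) (g : (Fin k → ZMod 2) → ℚ)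
    (s : (Fin k → ZMod 2) → ZMod 2),
    (∀ i b, 0 ≤ U i b) ∧ IsEDP g ∧
    ∀ x, f x = signQ (s x) * (∏ i, U i (x i)) * g x

/-- A function on `{0,1}^k` depends on variable `i`. -/
def DependsOnVar {k : ℕ} {β : Type} (h : (Fin k → ZMod 2) → β) (i : Fin k) : Prop :=
  ∃ x v, h (Function.update x i v) ≠ h x

/-- The function `s : {0,1}^k → GF(2)` has degree at most `d`, i.e. it is
represented by a polynomial over `GF(2)` of total degree at most `d`. -/
def DegLE {k : ℕ} (d : ℕ) (s : (Fin k → ZMod 2) → ZMod 2) : Prop :=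
  ∃ p : MvPolynomial (Fin k) (ZMod 2),
    p.totalDegree ≤ d ∧ ∀ x, MvPolynomial.eval x p = s x

/-- The degree of `s`: the minimal total degree of a representing polynomial
(equivalently, the total degree of the unique multilinear representative). -/
noncomputable def funDeg {k : ℕ} (s : (Fin k → ZMod 2) → ZMod 2) : ℕ :=
  sInf {d | DegLE d s}

/-- Variable `i` is determined in the expression `(s, U, T)`: exactly one term of
`T` involves `i`, `U i 0 = U i 1 = 1`, and `s` does not depend on `x_i`. -/
def Determined {k : ℕ} (U : Fin k → ZMod 2 → ℚ)
    (T : List ((Fin k × Fin k) × Bool)) (s : (Fin k → ZMod 2) → ZMod 2)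
    (i : Fin k) : Prop :=
  T.countP (fun t => decide (t.1.1 = i ∨ t.1.2 = i)) = 1 ∧
  U i 0 = 1 ∧ U i 1 = 1 ∧ ¬ DependsOnVar s i

/-! ### Auxiliary development -/

namespace PTNorm

variable {k : ℕ}

lemma signQ_ne_zero (a : ZMod 2) : signQ a ≠ 0 := by
  unfold signQ; split <;> norm_num

open MvPolynomial in
/-- Interpolation: every function is represented by a polynomial of degree `≤ k`. -/
lemma degLE_interp (t : (Fin k → ZMod 2) → ZMod 2) : DegLE k t := by
  refine ⟨∑ a : Fin k → ZMod 2, C (t a) * ∏ i, (X i + C (a i + 1)), ?_, ?_⟩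
  · refine totalDegree_finsetSum_le ?_
    intro a _
    calc (C (t a) * ∏ i, (X i + C (a i + 1))).totalDegree
        ≤ (C (t a)).totalDegree + (∏ i, (X i + C (a i + 1))).totalDegree :=
          totalDegree_mul _ _
      _ ≤ 0 + ∑ i : Fin k, (X i + C (a i + 1)).totalDegree := by
          gcongr
          · exact le_of_eq (totalDegree_C _)
          · exact totalDegree_finset_prod _ _
      _ ≤ 0 + ∑ _i : Fin k, 1 := by
          gcongr with i
          refine (totalDegree_add _ _).trans (max_le ?_ ?_)
          · exact le_of_eq (totalDegree_X i)
          · exact le_trans (le_of_eq (totalDegree_C _)) zero_le_one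
      _ ≤ k := by simp
  · intro x
    have key : ∀ a : Fin k → ZMod 2, (∏ i, (x i + (a i + 1))) = if a = x then 1 else 0 := by
      intro a
      split
      · subst ‹a = x›
        refine Finset.prod_eq_one fun i _ => ?_
        have : ∀ b : ZMod 2, b + (b + 1) = 1 := by decide
        exact this _
      · obtain ⟨i, hi⟩ := Function.ne_iff.1 ‹a ≠ x›
        refine Finset.prod_eq_zero (Finset.mem_univ i) ?_
        revert hi
        have : ∀ b c : ZMod 2, b ≠ c → c + (b + 1) = 0 := by decide
        exact fun h => this _ _ h
    rw [map_sum]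
    rw [Finset.sum_eq_single_of_mem x (Finset.mem_univ x)]
    · simp [key]
    · intro a _ ha
      simp [key, ha]

open MvPolynomial in
lemma totalDegree_bind1_le (g : Fin k → MvPolynomial (Fin k) (ZMod 2))
    (hg : ∀ i, (g i).totalDegree ≤ 1) (p : MvPolynomial (Fin k) (ZMod 2)) :
    (bind₁ g p).totalDegree ≤ p.totalDegree := by
  conv_lhs => rw [p.as_sum]
  rw [map_sum]
  refine totalDegree_finsetSum_le ?_
  intro v hv
  rw [monomial_eq, map_mul, bind₁_C_right, Finsupp.prod, map_prod]
  calc (C (coeff v p) * ∏ i ∈ v.support, bind₁ g (X i ^ v i)).totalDegree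
      ≤ (C (coeff v p)).totalDegree
        + (∏ i ∈ v.support, bind₁ g (X i ^ v i)).totalDegree := totalDegree_mul _ _
    _ ≤ 0 + ∑ i ∈ v.support, (bind₁ g (X i ^ v i)).totalDegree := by
        gcongr
        · exact le_of_eq (totalDegree_C _)
        · exact totalDegree_finset_prod _ _
    _ ≤ 0 + ∑ i ∈ v.support, v i := by
        gcongr with i hi
        rw [map_pow, bind₁_X_right]
        refine (totalDegree_pow _ _).trans ?_
        calc v i * (g i).totalDegree ≤ v i * 1 := Nat.mul_le_mul_left _ (hg i)
          _ = v i := Nat.mul_one _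
    _ ≤ p.totalDegree := by
        rw [Nat.zero_add]
        exact le_totalDegree hv

/-! ### The equivalence relation and representatives -/

variable (f : (Fin k → ZMod 2) → ℚ) (x₀ : Fin k → ZMod 2)

/-- Variable `i` is not constant on the support of `f`. -/
def Free (i : Fin k) : Prop := ∃ x, f x ≠ 0 ∧ x i ≠ x₀ i

/-- On the support of `f`, `x i + x j` is constant. -/
def Rel (i j : Fin k) : Prop := ∀ x, f x ≠ 0 → x i + x j = x₀ i + x₀ j

instance : DecidablePred (Free f x₀) := fun _ => by unfold Free; infer_instance

instance : ∀ i j, Decidable (Rel f x₀ i j) := fun _ _ => by unfold Rel; infer_instance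

lemma rel_refl (i : Fin k) : Rel f x₀ i i := by
  intro x _
  have z : ∀ a b : ZMod 2, a + a = b + b := by decide
  exact z _ _

lemma rel_symm {i j : Fin k} (h : Rel f x₀ i j) : Rel f x₀ j i := by
  intro x hx
  have := h x hx
  have z : ∀ a b c d : ZMod 2, a + b = c + d → b + a = d + c := by decide
  exact z _ _ _ _ this

lemma rel_trans {i j l : Fin k} (h1 : Rel f x₀ i j) (h2 : Rel f x₀ j l) :
    Rel f x₀ i l := by
  intro x hx
  have e1 := h1 x hx; have e2 := h2 x hx
  have z : ∀ a b c p q r : ZMod 2, a + b = p + q → b + c = q + r → a + c = p + r := by decide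
  exact z _ _ _ _ _ _ e1 e2

/-- The representative of the class of `i`. -/
def rep (i : Fin k) : Fin k :=
  (Finset.univ.filter (fun j => Rel f x₀ i j)).min'
    ⟨i, Finset.mem_filter.2 ⟨Finset.mem_univ i, rel_refl f x₀ i⟩⟩

lemma rel_rep (i : Fin k) : Rel f x₀ i (rep f x₀ i) := by
  have := Finset.min'_mem (Finset.univ.filter (fun j => Rel f x₀ i j))
    ⟨i, Finset.mem_filter.2 ⟨Finset.mem_univ i, rel_refl f x₀ i⟩⟩
  exact (Finset.mem_filter.1 this).2

lemma rep_congr {i j : Fin k} (h : Rel f x₀ i j) : rep f x₀ i = rep f x₀ j := by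
  unfold rep
  congr 1
  ext l
  simp only [Finset.mem_filter, Finset.mem_univ, true_and]
  exact ⟨fun h' => rel_trans f x₀ (rel_symm f x₀ h) h',
    fun h' => rel_trans f x₀ h h'⟩

lemma rep_rep (i : Fin k) : rep f x₀ (rep f x₀ i) = rep f x₀ i :=
  (rep_congr f x₀ (rel_rep f x₀ i)).symm

lemma free_congr {i j : Fin k} (h : Rel f x₀ i j) (hi : Free f x₀ i) :
    Free f x₀ j := by
  obtain ⟨y, hy, hyi⟩ := hi
  refine ⟨y, hy, ?_⟩
  have := h y hy
  have z : ∀ a b c d : ZMod 2, a + b = c + d → a ≠ c → b ≠ d := by decide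
  exact z _ _ _ _ this hyi

lemma free_rep {i : Fin k} (hi : Free f x₀ i) : Free f x₀ (rep f x₀ i) :=
  free_congr f x₀ (rel_rep f x₀ i) hi

/-- The retraction onto the support. -/
def rho (x : Fin k → ZMod 2) : Fin k → ZMod 2 := fun i =>
  if Free f x₀ i then x (rep f x₀ i) + x₀ (rep f x₀ i) + x₀ i else x₀ i


/-! ### Support characterization -/

lemma factor_iff (lab : Bool) (u v : ZMod 2) :
    ((if lab = true then (if u = v then (1:ℚ) else 0) else (if u = v then 0 else 1)) = 1)
      ↔ (u + v = if lab then 0 else 1) := by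
  cases lab <;> by_cases h : u = v <;>
    simp [h] <;> revert h <;> revert u v <;> decide

lemma factor_val (u v c d : ZMod 2) :
    (if (decide (c = d)) = true then (if u = v then (1:ℚ) else 0) else (if u = v then 0 else 1))
      = if v = u + c + d then 1 else 0 := by
  have hz : (v = u + c + d) ↔ ((u = v) ↔ (c = d)) := by revert u v c d; decide
  split_ifs <;> first
    | rfl
    | (exfalso; simp only [decide_eq_true_eq] at *; tauto)

lemma edpFactor_one_iff (t : (Fin k × Fin k) × Bool) (x : Fin k → ZMod 2) :
    edpFactor t x = 1 ↔ x t.1.1 + x t.1.2 = (if t.2 then 0 else 1) := by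
  rw [edpFactor]; exact factor_iff t.2 _ _

lemma edpFactor_zero_or_one (t : (Fin k × Fin k) × Bool) (x : Fin k → ZMod 2) :
    edpFactor t x = 0 ∨ edpFactor t x = 1 := by
  rw [edpFactor]; split <;> split <;> simp

lemma gT_eq_one {T : List ((Fin k × Fin k) × Bool)} {x : Fin k → ZMod 2}
    (h : ∀ t ∈ T, edpFactor t x = 1) : gT T x = 1 := by
  rw [gT]
  refine List.prod_eq_one ?_
  intro q hq
  obtain ⟨t, ht, rfl⟩ := List.mem_map.1 hq
  exact h t ht

lemma gT_ne_zero_iff {T : List ((Fin k × Fin k) × Bool)} {x : Fin k → ZMod 2} :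
    gT T x ≠ 0 ↔ ∀ t ∈ T, edpFactor t x = 1 := by
  constructor
  · intro h t ht
    rcases edpFactor_zero_or_one t x with h0 | h1
    · exfalso
      apply h
      rw [gT]
      exact List.prod_eq_zero (List.mem_map.2 ⟨t, ht, h0⟩)
    · exact h1
  · intro h
    rw [gT_eq_one h]
    norm_num

variable {s : (Fin k → ZMod 2) → ZMod 2} {U : Fin k → ZMod 2 → ℚ}
  {T : List ((Fin k × Fin k) × Bool)}

lemma support_iff {f : (Fin k → ZMod 2) → ℚ}
    (hrepr : ∀ x, f x = signQ (s x) * (∏ i, U i (x i)) * gT T x) (x : Fin k → ZMod 2) :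
    f x ≠ 0 ↔ ((∀ i, U i (x i) ≠ 0) ∧ ∀ t ∈ T, edpFactor t x = 1) := by
  rw [hrepr x, mul_ne_zero_iff, mul_ne_zero_iff, Finset.prod_ne_zero_iff]
  constructor
  · rintro ⟨⟨-, h1⟩, h2⟩
    exact ⟨fun i => h1 i (Finset.mem_univ i), gT_ne_zero_iff.1 h2⟩
  · rintro ⟨h1, h2⟩
    exact ⟨⟨signQ_ne_zero _, fun i _ => h1 i⟩, gT_ne_zero_iff.2 h2⟩

/-! ### The membership criterion -/

section Membership

variable {f : (Fin k → ZMod 2) → ℚ} {x₀ : Fin k → ZMod 2}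
  (hs : ∀ x, f x ≠ 0 ↔ ((∀ i, U i (x i) ≠ 0) ∧ ∀ t ∈ T, edpFactor t x = 1))
  (hx₀ : f x₀ ≠ 0)

include hs hx₀

lemma mem_iff (x : Fin k → ZMod 2) : f x ≠ 0 ↔ ∀ i, x i = rho f x₀ x i := by
  constructor
  · intro hx i
    rw [rho]
    split
    · rename_i hfree
      have := rel_rep f x₀ i x hx
      have z : ∀ a b c d : ZMod 2, a + b = c + d → a = b + d + c := by decide
      exact z _ _ _ _ this
    · rename_i hnf
      by_contra hne
      exact hnf ⟨x, hx, hne⟩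
  · intro h
    rw [hs]
    constructor
    · intro i
      by_cases hxi : x i = x₀ i
      · rw [hxi]
        exact ((hs x₀).1 hx₀).1 i
      · have hfree : Free f x₀ i := by
          by_contra hnf
          exact hxi (by rw [h i, rho, if_neg hnf])
        obtain ⟨y, hy, hyi⟩ := hfree
        have : y i = x i := by
          have z : ∀ a b c : ZMod 2, a ≠ c → b ≠ c → a = b := by decide
          exact z _ _ _ hyi hxi
        rw [← this]
        exact ((hs y).1 hy).1 i
    · intro t ht
      have hrel : Rel f x₀ t.1.1 t.1.2 := by
        intro y hy
        have h1 := (edpFactor_one_iff t y).1 (((hs y).1 hy).2 t ht)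
        have h2 := (edpFactor_one_iff t x₀).1 (((hs x₀).1 hx₀).2 t ht)
        rw [h1, h2]
      have hx0t := (edpFactor_one_iff t x₀).1 (((hs x₀).1 hx₀).2 t ht)
      rw [edpFactor_one_iff]
      suffices hsuf : x t.1.1 + x t.1.2 = x₀ t.1.1 + x₀ t.1.2 by rw [hsuf, hx0t]
      by_cases hfa : Free f x₀ t.1.1
      · have hfb : Free f x₀ t.1.2 := free_congr f x₀ hrel hfa
        have hrr : rep f x₀ t.1.1 = rep f x₀ t.1.2 := rep_congr f x₀ hrel
        have e1 := h t.1.1; have e2 := h t.1.2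
        rw [rho, if_pos hfa] at e1
        rw [rho, if_pos hfb, ← hrr] at e2
        rw [e1, e2]
        have z : ∀ p q r v : ZMod 2, (p + q + r) + (p + q + v) = r + v := by decide
        exact z _ _ _ _
      · have hfb : ¬ Free f x₀ t.1.2 := fun hb =>
          hfa (free_congr f x₀ (rel_symm f x₀ hrel) hb)
        have e1 := h t.1.1; have e2 := h t.1.2
        rw [rho, if_neg hfa] at e1
        rw [rho, if_neg hfb] at e2
        rw [e1, e2]

lemma rho_id {x : Fin k → ZMod 2} (hx : f x ≠ 0) : rho f x₀ x = x :=
  funext fun i => ((mem_iff hs hx₀ x).1 hx i).symm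

lemma rho_mem (x : Fin k → ZMod 2) : f (rho f x₀ x) ≠ 0 := by
  rw [mem_iff hs hx₀]
  intro i
  by_cases hfree : Free f x₀ i
  · rw [rho, rho, if_pos hfree, if_pos hfree, rho,
      if_pos (free_rep f x₀ hfree), rep_rep]
    have z : ∀ a b c : ZMod 2, a + b + c = a + b + b + b + c := by decide
    exact z _ _ _
  · rw [rho, rho, if_neg hfree, if_neg hfree]

end Membership


/-! ### The normalized expression -/

/-- The new unary functions. -/
def Uc (U : Fin k → ZMod 2 → ℚ) : Fin k → ZMod 2 → ℚ := fun i b =>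
  if Free f x₀ i then
    (if rep f x₀ i = i then
      ∏ j ∈ Finset.univ.filter (fun j => Free f x₀ j ∧ rep f x₀ j = i),
        U j (b + x₀ i + x₀ j)
    else 1)
  else (if b = x₀ i then U i (x₀ i) else 0)

/-- The new list of terms. -/
def Tc : List ((Fin k × Fin k) × Bool) :=
  ((List.finRange k).filter (fun i => decide (Free f x₀ i ∧ rep f x₀ i ≠ i))).map
    (fun i => ((rep f x₀ i, i), decide (x₀ (rep f x₀ i) = x₀ i)))

lemma mem_Tc {t : (Fin k × Fin k) × Bool} :
    t ∈ Tc f x₀ ↔ ∃ i, Free f x₀ i ∧ rep f x₀ i ≠ i ∧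
      t = ((rep f x₀ i, i), decide (x₀ (rep f x₀ i) = x₀ i)) := by
  constructor
  · intro ht
    obtain ⟨i, hi, rfl⟩ := List.mem_map.1 ht
    have h2 := of_decide_eq_true (List.mem_filter.1 hi).2
    exact ⟨i, h2.1, h2.2, rfl⟩
  · rintro ⟨i, h1, h2, rfl⟩
    exact List.mem_map.2 ⟨i, List.mem_filter.2
      ⟨List.mem_finRange i, decide_eq_true ⟨h1, h2⟩⟩, rfl⟩

lemma Tc_countP {i : Fin k} (hi : Free f x₀ i) (hri : rep f x₀ i ≠ i) :
    (Tc f x₀).countP (fun t => decide (t.1.1 = i ∨ t.1.2 = i)) = 1 := by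
  rw [Tc, List.countP_map]
  have hcongr : ((List.finRange k).filter
      (fun i => decide (Free f x₀ i ∧ rep f x₀ i ≠ i))).countP
        ((fun t : (Fin k × Fin k) × Bool => decide (t.1.1 = i ∨ t.1.2 = i)) ∘
          (fun j => ((rep f x₀ j, j), decide (x₀ (rep f x₀ j) = x₀ j))))
      = ((List.finRange k).filter
      (fun i => decide (Free f x₀ i ∧ rep f x₀ i ≠ i))).countP (· == i) := by
    refine List.countP_congr ?_
    intro j hj
    have h2 := of_decide_eq_true (List.mem_filter.1 hj).2
    simp only [Function.comp_apply, decide_eq_true_eq, beq_iff_eq]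
    constructor
    · rintro (h | h)
      · exfalso
        apply hri
        rw [← h]
        exact rep_rep f x₀ j
      · exact h
    · exact fun h => Or.inr h
  rw [hcongr, ← List.count_eq_countP]
  exact List.count_eq_one_of_mem ((List.nodup_finRange k).filter _)
    (List.mem_filter.2 ⟨List.mem_finRange i, decide_eq_true ⟨hi, hri⟩⟩)

lemma edpFactor_pair (a b : Fin k) (c d : ZMod 2) (x : Fin k → ZMod 2) :
    edpFactor ((a, b), decide (c = d)) x = if x b = x a + c + d then 1 else 0 :=
  factor_val (x a) (x b) c d

lemma gTc_eq_one {x : Fin k → ZMod 2}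
    (h : ∀ j, Free f x₀ j → rep f x₀ j ≠ j →
      x j = x (rep f x₀ j) + x₀ (rep f x₀ j) + x₀ j) : gT (Tc f x₀) x = 1 := by
  refine gT_eq_one ?_
  intro t ht
  obtain ⟨j, h1, h2, rfl⟩ := (mem_Tc f x₀).1 ht
  rw [edpFactor_pair, if_pos (h j h1 h2)]

lemma gTc_eq_zero {x : Fin k → ZMod 2} {j : Fin k} (h1 : Free f x₀ j)
    (hne : x j ≠ x (rep f x₀ j) + x₀ (rep f x₀ j) + x₀ j) : gT (Tc f x₀) x = 0 := by
  have h2 : rep f x₀ j ≠ j := by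
    intro he
    apply hne
    rw [he]
    have z : ∀ a b : ZMod 2, a = a + b + b := by decide
    exact z _ _
  rw [gT]
  refine List.prod_eq_zero (List.mem_map.2 ⟨_, (mem_Tc f x₀).2 ⟨j, h1, h2, rfl⟩, ?_⟩)
  rw [edpFactor_pair, if_neg hne]

lemma gTc_update {i : Fin k} (hnf : ¬ Free f x₀ i) (x : Fin k → ZMod 2) (v : ZMod 2) :
    gT (Tc f x₀) (Function.update x i v) = gT (Tc f x₀) x := by
  rw [gT, gT]
  congr 1
  refine List.map_congr_left ?_
  intro t ht
  obtain ⟨j, h1, h2, rfl⟩ := (mem_Tc f x₀).1 ht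
  rw [edpFactor_pair, edpFactor_pair,
    Function.update_of_ne (fun he : j = i => hnf (he ▸ h1)),
    Function.update_of_ne (fun he : rep f x₀ j = i => hnf (he ▸ free_rep f x₀ h1))]

lemma rho_update {i : Fin k} (h : ¬ (Free f x₀ i ∧ rep f x₀ i = i))
    (x : Fin k → ZMod 2) (v : ZMod 2) :
    rho f x₀ (Function.update x i v) = rho f x₀ x := by
  funext j
  rw [rho, rho]
  split
  · rename_i hj
    rw [Function.update_of_ne]
    intro he
    exact h ⟨he ▸ free_rep f x₀ hj, he ▸ rep_rep f x₀ j⟩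
  · rfl

lemma Uc_nonneg {U : Fin k → ZMod 2 → ℚ} (hU : ∀ i b, 0 ≤ U i b) (i : Fin k)
    (b : ZMod 2) : 0 ≤ Uc f x₀ U i b := by
  rw [Uc]
  split
  · split
    · exact Finset.prod_nonneg fun j _ => hU j _
    · exact zero_le_one
  · split
    · exact hU i _
    · exact le_refl 0

lemma Uc_free_nonrep {U : Fin k → ZMod 2 → ℚ} {i : Fin k} (h1 : Free f x₀ i)
    (h2 : rep f x₀ i ≠ i) (b : ZMod 2) : Uc f x₀ U i b = 1 := by
  rw [Uc, if_pos h1, if_neg h2]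


/-- A sign function is valid for a given expression. -/
def Valid (f : (Fin k → ZMod 2) → ℚ) (Uf : Fin k → ZMod 2 → ℚ)
    (Tf : List ((Fin k × Fin k) × Bool)) (s'' : (Fin k → ZMod 2) → ZMod 2) : Prop :=
  ∀ x, f x = signQ (s'' x) * (∏ i, Uf i (x i)) * gT Tf x

section Construction

variable {f : (Fin k → ZMod 2) → ℚ} {x₀ : Fin k → ZMod 2}
  (hs : ∀ x, f x ≠ 0 ↔ ((∀ i, U i (x i) ≠ 0) ∧ ∀ t ∈ T, edpFactor t x = 1))
  (hx₀ : f x₀ ≠ 0)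

include hs hx₀

lemma Uc_ne_zero {i : Fin k} (hi : Free f x₀ i) (b : ZMod 2) :
    Uc f x₀ U i b ≠ 0 := by
  rw [Uc, if_pos hi]
  split
  · refine Finset.prod_ne_zero_iff.2 ?_
    intro j hj
    have hjf : Free f x₀ j := (Finset.mem_filter.1 hj).2.1
    have hj0 : U j (x₀ j) ≠ 0 := ((hs x₀).1 hx₀).1 j
    have hj1 : U j (x₀ j + 1) ≠ 0 := by
      obtain ⟨y, hy, hyj⟩ := hjf
      have hyv : y j = x₀ j + 1 := by
        have z : ∀ a b : ZMod 2, a ≠ b → a = b + 1 := by decide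
        exact z _ _ hyj
      rw [← hyv]
      exact ((hs y).1 hy).1 j
    have z2 : ∀ c e : ZMod 2, c = e ∨ c = e + 1 := by decide
    rcases z2 (b + x₀ i + x₀ j) (x₀ j) with hc | hc <;> rw [hc] <;> assumption
  · exact one_ne_zero

lemma prodUc_eq {x : Fin k → ZMod 2} (hx : f x ≠ 0) :
    ∏ i, Uc f x₀ U i (x i) = ∏ i, U i (x i) := by
  have hmem := (mem_iff hs hx₀ x).1 hx
  have hfix : ∀ i, ¬ Free f x₀ i → x i = x₀ i := fun i hnf => by
    have := hmem i; rwa [rho, if_neg hnf] at this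
  have hfree : ∀ i, Free f x₀ i → x i = x (rep f x₀ i) + x₀ (rep f x₀ i) + x₀ i :=
    fun i hf => by have := hmem i; rwa [rho, if_pos hf] at this
  rw [← Finset.prod_filter_mul_prod_filter_not Finset.univ (fun i => Free f x₀ i)
        (fun i => Uc f x₀ U i (x i)),
      ← Finset.prod_filter_mul_prod_filter_not Finset.univ (fun i => Free f x₀ i)
        (fun i => U i (x i))]
  congr 1
  · -- the free part
    rw [← Finset.prod_filter_mul_prod_filter_not
        (Finset.univ.filter (fun i => Free f x₀ i)) (fun i => rep f x₀ i = i)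
        (fun i => Uc f x₀ U i (x i))]
    have h2 : ∏ i ∈ (Finset.univ.filter (fun i => Free f x₀ i)).filter
        (fun i => ¬ rep f x₀ i = i), Uc f x₀ U i (x i) = 1 := by
      refine Finset.prod_eq_one ?_
      intro i hi
      rw [Finset.filter_filter, Finset.mem_filter] at hi
      exact Uc_free_nonrep f x₀ hi.2.1 hi.2.2 _
    rw [h2, mul_one]
    have h3 : ∀ i ∈ (Finset.univ.filter (fun i => Free f x₀ i)).filter
        (fun i => rep f x₀ i = i), Uc f x₀ U i (x i) =
          ∏ j ∈ (Finset.univ.filter (fun j => Free f x₀ j)).filter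
            (fun j => rep f x₀ j = i), U j (x j) := by
      intro i hi
      rw [Finset.filter_filter, Finset.mem_filter] at hi
      rw [Uc, if_pos hi.2.1, if_pos hi.2.2, Finset.filter_filter]
      refine Finset.prod_congr rfl ?_
      intro j hj
      rw [Finset.mem_filter] at hj
      congr 1
      rw [hfree j hj.2.1, hj.2.2]
    rw [Finset.prod_congr rfl h3]
    refine Finset.prod_fiberwise_of_maps_to ?_ (fun j => U j (x j))
    intro j hj
    rw [Finset.mem_filter] at hj
    rw [Finset.filter_filter, Finset.mem_filter]
    exact ⟨Finset.mem_univ _, free_rep f x₀ hj.2, rep_rep f x₀ j⟩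
  · -- the fixed part
    refine Finset.prod_congr rfl ?_
    intro i hi
    have hnf := (Finset.mem_filter.1 hi).2
    rw [Uc, if_neg hnf, if_pos (hfix i hnf), hfix i hnf]

lemma zero_part {x : Fin k → ZMod 2} (hx : f x = 0) :
    (∏ i, Uc f x₀ U i (x i)) * gT (Tc f x₀) x = 0 := by
  have hnm : ¬ ∀ i, x i = rho f x₀ x i := by
    intro h
    exact (mem_iff hs hx₀ x).2 h hx
  push_neg at hnm
  obtain ⟨i, hi⟩ := hnm
  by_cases hfree : Free f x₀ i
  · rw [rho, if_pos hfree] at hi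
    rw [gTc_eq_zero f x₀ hfree hi, mul_zero]
  · rw [rho, if_neg hfree] at hi
    have h0 : Uc f x₀ U i (x i) = 0 := by rw [Uc, if_neg hfree, if_neg hi]
    rw [Finset.prod_eq_zero (Finset.mem_univ i) h0, zero_mul]

omit hx₀ in
lemma expr_valid {s : (Fin k → ZMod 2) → ZMod 2}
    (hrepr : ∀ x, f x = signQ (s x) * (∏ i, U i (x i)) * gT T x)
    (hx₀' : f x₀ ≠ 0) :
    Valid f (Uc f x₀ U) (Tc f x₀) (fun x => s (rho f x₀ x)) := by
  intro x
  by_cases hx : f x = 0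
  · rw [hx, mul_assoc, zero_part hs hx₀' hx, mul_zero]
  · have hmem := (mem_iff hs hx₀' x).1 hx
    have hfree : ∀ j, Free f x₀ j → rep f x₀ j ≠ j →
        x j = x (rep f x₀ j) + x₀ (rep f x₀ j) + x₀ j :=
      fun j hf _ => by have := hmem j; rwa [rho, if_pos hf] at this
    have hrho := rho_id hs hx₀' hx
    simp only [hrho]
    rw [gTc_eq_one f x₀ hfree, prodUc_eq hs hx₀' hx,
      hrepr x, gT_eq_one (((hs x).1 hx).2), mul_one]

lemma valid_comp_rho {s'' : (Fin k → ZMod 2) → ZMod 2}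
    (hv : Valid f (Uc f x₀ U) (Tc f x₀) s'') :
    Valid f (Uc f x₀ U) (Tc f x₀) (fun x => s'' (rho f x₀ x)) := by
  intro x
  by_cases hx : f x = 0
  · rw [hx, mul_assoc, zero_part hs hx₀ hx, mul_zero]
  · have hrho := rho_id hs hx₀ hx
    simp only [hrho]
    exact hv x

end Construction

open MvPolynomial in
lemma degLE_comp_rho (f : (Fin k → ZMod 2) → ℚ) (x₀ : Fin k → ZMod 2)
    (t : (Fin k → ZMod 2) → ZMod 2) {d : ℕ} (h : DegLE d t) :
    DegLE d (fun x => t (rho f x₀ x)) := by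
  obtain ⟨p, hp, hev⟩ := h
  set g' : Fin k → MvPolynomial (Fin k) (ZMod 2) := fun i =>
    if Free f x₀ i then X (rep f x₀ i) + C (x₀ (rep f x₀ i) + x₀ i) else C (x₀ i)
    with hg'
  refine ⟨bind₁ g' p, ?_, ?_⟩
  · refine le_trans (totalDegree_bind1_le g' ?_ p) hp
    intro i
    rw [hg']
    dsimp only
    split
    · refine (totalDegree_add _ _).trans (max_le ?_ ?_)
      · exact le_of_eq (totalDegree_X _)
      · exact le_trans (le_of_eq (totalDegree_C _)) zero_le_one
    · exact le_trans (le_of_eq (totalDegree_C _)) zero_le_one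
  · intro x
    have heval : eval x (bind₁ g' p) = eval (fun i => eval x (g' i)) p :=
      eval₂Hom_bind₁ (RingHom.id (ZMod 2)) x g' p
    rw [heval]
    have harg : (fun i => eval x (g' i)) = rho f x₀ x := by
      funext i
      rw [hg', rho]
      dsimp only
      split
      · simp [add_assoc]
      · simp
    rw [harg, hev]

end PTNorm

open PTNorm

/-- Every function of product type admits a normalized product-type expression. -/
theorem productType_normalized_expression {k : ℕ} (f : (Fin k → ZMod 2) → ℚ)
    (hf : IsProductType f) :
    ∃ (U : Fin k → ZMod 2 → ℚ) (T : List ((Fin k × Fin k) × Bool))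
      (s : (Fin k → ZMod 2) → ZMod 2),
      -- it is a product-type expression for f ...
      (∀ i b, 0 ≤ U i b) ∧
      (∀ t ∈ T, t.1.1 ≠ t.1.2) ∧
      (∀ x, f x = signQ (s x) * (∏ i, U i (x i)) * gT T x) ∧
      -- (i) every term of T involves a determined variable
      (∀ t ∈ T, Determined U T s t.1.1 ∨ Determined U T s t.1.2) ∧
      -- (ii) if U_i vanishes somewhere then neither g_T nor s depends on x_i
      (∀ i, (U i 0 = 0 ∨ U i 1 = 0) →
        ¬ DependsOnVar (gT T) i ∧ ¬ DependsOnVar s i) ∧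
      -- (iii) s has minimal degree among all sign functions for this expression
      (∀ s' : (Fin k → ZMod 2) → ZMod 2,
        (∀ x, f x = signQ (s' x) * (∏ i, U i (x i)) * gT T x) →
        funDeg s ≤ funDeg s') := by
  obtain ⟨U, g, s, hU, ⟨T, hgT⟩, hrepr0⟩ := hf
  have hrepr : ∀ x, f x = signQ (s x) * (∏ i, U i (x i)) * gT T x := by
    intro x; rw [hrepr0 x, hgT x]
  by_cases hex : ∃ x₀, f x₀ ≠ 0
  · -- main case
    obtain ⟨x₀, hx₀⟩ := hex
    have hs : ∀ x, f x ≠ 0 ↔ ((∀ i, U i (x i) ≠ 0) ∧ ∀ t ∈ T, edpFactor t x = 1) :=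
      fun x => support_iff hrepr x
    -- a valid sign function of minimal degree
    set VD : Set ℕ := {n | ∃ s'', Valid f (Uc f x₀ U) (Tc f x₀) s'' ∧ funDeg s'' = n}
      with hVDdef
    have hVD : VD.Nonempty :=
      ⟨_, ⟨_, expr_valid hs hrepr hx₀, rfl⟩⟩
    obtain ⟨s_min, hs_min_valid, hs_min_deg⟩ := Nat.sInf_mem hVD
    refine ⟨Uc f x₀ U, Tc f x₀, fun x => s_min (rho f x₀ x), ?_, ?_, ?_, ?_, ?_, ?_⟩
    · exact Uc_nonneg f x₀ hU
    · intro t ht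
      obtain ⟨i, h1, h2, rfl⟩ := (mem_Tc f x₀).1 ht
      exact h2
    · exact valid_comp_rho hs hx₀ hs_min_valid
    · -- (i) determined variables
      intro t ht
      obtain ⟨i, h1, h2, rfl⟩ := (mem_Tc f x₀).1 ht
      refine Or.inr ⟨Tc_countP f x₀ h1 h2, Uc_free_nonrep f x₀ h1 h2 0,
        Uc_free_nonrep f x₀ h1 h2 1, ?_⟩
      rintro ⟨x, v, hne⟩
      refine hne ?_
      dsimp only
      rw [rho_update f x₀ (fun hc => h2 hc.2) x v]
    · -- (ii) vanishing unaries
      intro i hvan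
      have hnf : ¬ Free f x₀ i := by
        intro hfree
        rcases hvan with h | h
        · exact Uc_ne_zero hs hx₀ hfree 0 h
        · exact Uc_ne_zero hs hx₀ hfree 1 h
      constructor
      · rintro ⟨x, v, hne⟩
        exact hne (gTc_update f x₀ hnf x v)
      · rintro ⟨x, v, hne⟩
        refine hne ?_
        dsimp only
        rw [rho_update f x₀ (fun hc => hnf hc.1) x v]
    · -- (iii) minimality of the degree
      intro s' hs'
      have step1 : DegLE (funDeg s_min) s_min :=
        Nat.sInf_mem (⟨k, degLE_interp s_min⟩ : {d | DegLE d s_min}.Nonempty)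
      have step2 : DegLE (funDeg s_min) (fun x => s_min (rho f x₀ x)) :=
        degLE_comp_rho f x₀ s_min step1
      have step3 : funDeg (fun x => s_min (rho f x₀ x)) ≤ funDeg s_min :=
        Nat.sInf_le step2
      refine step3.trans ?_
      rw [hs_min_deg]
      exact Nat.sInf_le ⟨s', hs', rfl⟩
  · -- the zero function
    push_neg at hex
    have hk : 0 < k := by
      by_contra hk0
      push_neg at hk0
      have hk0' : k = 0 := Nat.le_zero.1 hk0
      subst hk0'
      have hT : T = [] := List.eq_nil_iff_forall_not_mem.2 (fun t ht => t.1.1.elim0)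
      have hx := hrepr (fun i => i.elim0)
      rw [hex _, hT] at hx
      have h1 : (∏ i : Fin 0, U i ((fun j : Fin 0 => j.elim0) i)) = 1 := by simp
      rw [h1, mul_one] at hx
      have h2 : gT ([] : List ((Fin 0 × Fin 0) × Bool)) (fun i => i.elim0) = 1 := by
        rw [gT]; simp
      rw [h2, mul_one] at hx
      exact signQ_ne_zero _ hx.symm
    refine ⟨fun _ _ => 0, [], fun _ => 0, ?_, ?_, ?_, ?_, ?_, ?_⟩
    · intro i b; exact le_refl 0
    · intro t ht; exact absurd ht List.not_mem_nil
    · intro x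
      rw [hex x, Finset.prod_eq_zero (Finset.mem_univ (⟨0, hk⟩ : Fin k)) rfl,
        mul_zero, zero_mul]
    · intro t ht; exact absurd ht List.not_mem_nil
    · intro i _
      constructor <;> (rintro ⟨x, v, hne⟩; exact hne rfl)
    · intro s' _
      have h0 : funDeg (fun _ : Fin k → ZMod 2 => (0 : ZMod 2)) = 0 := by
        rw [funDeg]
        refine Nat.sInf_eq_zero.2 (Or.inl ?_)
        exact ⟨0, by simp, fun x => by simp⟩
      rw [h0]
      exact Nat.zero_le _
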